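/- The Dickson invariants C_{n,0}, C_{n,1}, …, C_{n,n−1} are algebraically independent over F_q in the polynomial ring R = F_q[x_1,…,x_n]. -/

import Mathlib

/-- `f_n(X) = ∏_{(k_1,…,k_n) ∈ F_q^n} (X − Σ_i k_i x_i) ∈ R[X]`, where
`R = F_q[x_1,…,x_n]` and `F_q = GaloisField p m`. -/
noncomputable def dicksonF (p m n : ℕ) [Fact p.Prime] [Fintype (GaloisField p m)] :
    Polynomial (MvPolynomial (Fin n) (GaloisField p m)) :=
  ∏ k : Fin n → GaloisField p m,
    (Polynomial.X - Polynomial.C (∑ i, MvPolynomial.C (k i) * MvPolynomial.X i))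

/-- The Dickson invariant `C_{n,i} := (−1)^{n+i} · (coefficient of X^{q^i} in f_n(X))`. -/
noncomputable def dicksonC (p m n : ℕ) [Fact p.Prime] [Fintype (GaloisField p m)]
    (i : ℕ) : MvPolynomial (Fin n) (GaloisField p m) :=
  (-1) ^ (n + i) * (dicksonF p m n).coeff ((p ^ m) ^ i)

open Polynomial

noncomputable def swapPoly (S : Type*) [CommSemiring S] :
    Polynomial (Polynomial S) →+* Polynomial (Polynomial S) :=
  eval₂RingHom (mapRingHom Polynomial.C) (Polynomial.C Polynomial.X)

lemma swapPoly_coeff_coeff {S : Type*} [CommSemiring S] (F : Polynomial (Polynomial S))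
    (e j : ℕ) : ((swapPoly S F).coeff j).coeff e = (F.coeff e).coeff j := by
  induction F using Polynomial.induction_on' with
  | add p q hp hq => simp [map_add, hp, hq]
  | monomial e₀ a =>
    have : swapPoly S ((Polynomial.monomial e₀) a)
        = Polynomial.map Polynomial.C a * (Polynomial.C Polynomial.X) ^ e₀ := by
      rw [swapPoly, coe_eval₂RingHom, eval₂_monomial, coe_mapRingHom]
    rw [this]
    simp only [← Polynomial.C_pow]
    rw [Polynomial.coeff_mul_C, Polynomial.coeff_map, Polynomial.coeff_C_mul,
      Polynomial.coeff_X_pow, Polynomial.coeff_monomial]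
    split_ifs with h1 h2 h3
    · rw [mul_one]
    · exact absurd h1.symm h2
    · exact absurd h3.symm h1
    · simp

lemma swapPoly_X_sub_C {S : Type*} [CommRing S] (a : Polynomial S) :
    swapPoly S (Polynomial.X - Polynomial.C a) =
      Polynomial.C Polynomial.X - a.map Polynomial.C := by
  rw [map_sub, swapPoly, coe_eval₂RingHom, eval₂_X, eval₂_C, coe_mapRingHom]

variable (p m : ℕ) [Fact p.Prime] [Fintype (GaloisField p m)]

local notation "K" => GaloisField p m

noncomputable local instance : DecidableEq (GaloisField p m) := Classical.decEq _

lemma finSuccEquiv_C' (n : ℕ) (a : K) :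
    MvPolynomial.finSuccEquiv K n (MvPolynomial.C a) = Polynomial.C (MvPolynomial.C a) := by
  rw [← MvPolynomial.algebraMap_eq, AlgEquiv.commutes, Polynomial.algebraMap_apply,
    MvPolynomial.algebraMap_eq]

lemma phi_linear (n : ℕ) (k : Fin (n+1) → K) :
    MvPolynomial.finSuccEquiv K n (∑ i, MvPolynomial.C (k i) * MvPolynomial.X i) =
      Polynomial.C (MvPolynomial.C (k 0)) * Polynomial.X +
        Polynomial.C (∑ i : Fin n, MvPolynomial.C (k (i.succ)) * MvPolynomial.X i) := by
  rw [map_sum, Fin.sum_univ_succ]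
  simp only [map_mul, MvPolynomial.finSuccEquiv_X_zero, MvPolynomial.finSuccEquiv_X_succ,
    finSuccEquiv_C']
  rw [map_sum]
  congr 1
  congr 1; ext i
  rw [map_mul]

/-- The elementary factor appearing after swapping. -/
noncomputable def dFac (n : ℕ) (c : K) (v : Fin n → K) :
    Polynomial (Polynomial (MvPolynomial (Fin n) K)) :=
  Polynomial.C (Polynomial.C (MvPolynomial.C (-c))) * Polynomial.X +
    Polynomial.C (Polynomial.X - Polynomial.C (∑ i, MvPolynomial.C (v i) * MvPolynomial.X i))

lemma swap_dicksonF (n : ℕ) :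
    swapPoly (MvPolynomial (Fin n) K)
      ((dicksonF p m (n+1)).map (MvPolynomial.finSuccEquiv K n).toAlgHom.toRingHom) =
    Polynomial.C (dicksonF p m n) *
      ∏ c ∈ Finset.univ.erase (0 : K), ∏ v : Fin n → K, dFac p m n c v := by
  have hmap : (dicksonF p m (n+1)).map (MvPolynomial.finSuccEquiv K n).toAlgHom.toRingHom =
      ∏ k : Fin (n+1) → K, (Polynomial.X - Polynomial.C
        (Polynomial.C (MvPolynomial.C (k 0)) * Polynomial.X +
          Polynomial.C (∑ i : Fin n, MvPolynomial.C (k (i.succ)) * MvPolynomial.X i))) := by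
    rw [dicksonF, Polynomial.map_prod]
    refine Finset.prod_congr rfl fun k _ => ?_
    rw [Polynomial.map_sub, Polynomial.map_X, Polynomial.map_C]
    rw [show (MvPolynomial.finSuccEquiv K n).toAlgHom.toRingHom
        (∑ i, MvPolynomial.C (k i) * MvPolynomial.X i)
      = MvPolynomial.finSuccEquiv K n (∑ i, MvPolynomial.C (k i) * MvPolynomial.X i) from rfl,
      phi_linear]
  rw [hmap, map_prod]
  have hfac : ∀ k : Fin (n+1) → K,
      swapPoly (MvPolynomial (Fin n) K) (Polynomial.X - Polynomial.C
        (Polynomial.C (MvPolynomial.C (k 0)) * Polynomial.X +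
          Polynomial.C (∑ i : Fin n, MvPolynomial.C (k (i.succ)) * MvPolynomial.X i)))
      = dFac p m n (k 0) (fun i => k i.succ) := by
    intro k
    rw [swapPoly_X_sub_C]
    rw [Polynomial.map_add, Polynomial.map_mul, Polynomial.map_C, Polynomial.map_X,
      Polynomial.map_C, dFac, map_neg]
    simp only [map_neg, map_sub]
    ring
  rw [Finset.prod_congr rfl fun k _ => hfac k]
  rw [Fintype.prod_equiv (Fin.consEquiv (fun _ : Fin (n+1) => K)).symm
      (fun k => dFac p m n (k 0) (fun i => k i.succ))
      (fun cv => dFac p m n cv.1 cv.2) (fun k => rfl)]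
  rw [Fintype.prod_prod_type]
  rw [← Finset.mul_prod_erase Finset.univ _ (Finset.mem_univ (0 : K))]
  congr 1
  rw [Finset.prod_congr rfl (fun v _ => show dFac p m n 0 v =
    Polynomial.C (Polynomial.X - Polynomial.C (∑ i, MvPolynomial.C (v i) * MvPolynomial.X i))
      from by rw [dFac]; simp)]
  rw [← map_prod, dicksonF]

lemma dicksonF_monic (n : ℕ) : (dicksonF p m n).Monic :=
  monic_prod_of_monic _ _ fun _ _ => monic_X_sub_C _

lemma cardK (hm : m ≠ 0) : Fintype.card (GaloisField p m) = p ^ m := by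
  rw [← Nat.card_eq_fintype_card, GaloisField.card p m hm]

lemma dicksonF_natDegree (n : ℕ) :
    (dicksonF p m n).natDegree = Fintype.card (GaloisField p m) ^ n := by
  rw [dicksonF, natDegree_prod_of_monic _ _ (fun k _ => monic_X_sub_C _)]
  simp only [natDegree_X_sub_C]
  simp [Fintype.card_fun]

lemma dicksonC_self (hm : m ≠ 0) (n : ℕ) : dicksonC p m n n = 1 := by
  rw [dicksonC, ← cardK p m hm, ← dicksonF_natDegree p m n,
    (dicksonF_monic p m n).coeff_natDegree]
  rw [← two_mul, pow_mul]
  simp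

lemma dicksonF_coeff_eq (n i : ℕ) :
    (dicksonF p m n).coeff ((p ^ m) ^ i) = (-1) ^ (n + i) * dicksonC p m n i := by
  rw [dicksonC, ← mul_assoc, ← pow_add, ← two_mul, pow_mul]
  simp

set_option maxHeartbeats 1000000 in
lemma dickson_step (n : ℕ) (hC : ∀ i : ℕ, i ≤ n → dicksonC p m n i ≠ 0) :
    ∃ ε : MvPolynomial (Fin n) K, ε ≠ 0 ∧ ∃ D : ℕ, 0 < D ∧
      ∀ i : ℕ, i ≤ n →
        (MvPolynomial.finSuccEquiv K n (dicksonC p m (n+1) i)).natDegree = D ∧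
        (MvPolynomial.finSuccEquiv K n (dicksonC p m (n+1) i)).leadingCoeff
          = ε * dicksonC p m n i := by
  set F₁ := dicksonF p m (n+1) with hF₁
  set G := F₁.map (MvPolynomial.finSuccEquiv K n).toAlgHom.toRingHom with hG
  set P₁ := ∏ c ∈ Finset.univ.erase (0 : K), ∏ v : Fin n → K, dFac p m n c v with hP₁
  set e₀ : MvPolynomial (Fin n) K := ∏ c ∈ Finset.univ.erase (0 : K), ∏ _v : Fin n → K,
    MvPolynomial.C (-c) with he₀def
  have he₀ : e₀ ≠ 0 := by
    rw [he₀def]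
    refine Finset.prod_ne_zero_iff.2 fun c hc => Finset.prod_ne_zero_iff.2 fun v _ => ?_
    have hc0 : c ≠ 0 := Finset.ne_of_mem_erase hc
    simp [hc0]
  have hdfne : ∀ c ∈ Finset.univ.erase (0 : K), ∀ v : Fin n → K,
      (dFac p m n c v).natDegree = 1 ∧ (dFac p m n c v).leadingCoeff
        = Polynomial.C (MvPolynomial.C (-c)) ∧ dFac p m n c v ≠ 0 := by
    intro c hc v
    unfold dFac
    have hc0 : c ≠ 0 := Finset.ne_of_mem_erase hc
    have ha : (Polynomial.C (MvPolynomial.C (-c)) : Polynomial (MvPolynomial (Fin n) K)) ≠ 0 := by simp [hc0]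
    refine ⟨natDegree_linear ha, leadingCoeff_linear ha, ?_⟩
    exact ne_zero_of_natDegree_gt (n := 0) (by rw [natDegree_linear ha]; norm_num)
  set D₀ := (Finset.univ.erase (0 : K)).card * Fintype.card (Fin n → K) with hD₀
  have hP₁deg : P₁.natDegree = D₀ := by
    rw [hP₁, natDegree_prod _ _ (fun c hc => Finset.prod_ne_zero_iff.2
      fun v hv => (hdfne c hc v).2.2)]
    rw [Finset.sum_congr rfl (fun c hc => natDegree_prod _ _ (fun v _ => (hdfne c hc v).2.2))]
    rw [Finset.sum_congr rfl (fun c hc =>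
      Finset.sum_congr rfl (fun v hv => (hdfne c hc v).1))]
    simp only [Finset.sum_const, smul_eq_mul, mul_one, Finset.card_univ]
    rfl
  have hP₁ne : P₁ ≠ 0 := by
    intro h0
    have h0' := hP₁deg
    rw [h0, natDegree_zero] at h0'
    refine absurd h0' (Nat.ne_of_lt ?_)
    rw [hD₀]
    exact Nat.mul_pos (Finset.card_pos.2 ⟨1, Finset.mem_erase.2 ⟨one_ne_zero,
      Finset.mem_univ _⟩⟩) Fintype.card_pos
  have hP₁lc : P₁.leadingCoeff = Polynomial.C e₀ := by
    rw [hP₁, leadingCoeff_prod]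
    rw [Finset.prod_congr rfl (fun c hc => leadingCoeff_prod _ _)]
    rw [Finset.prod_congr rfl (fun c hc =>
      Finset.prod_congr rfl (fun v hv => (hdfne c hc v).2.1))]
    rw [he₀def, map_prod]
    exact Finset.prod_congr rfl fun c hc =>
      (map_prod (Polynomial.C : MvPolynomial (Fin n) K →+* Polynomial (MvPolynomial (Fin n) K))
        (fun _v => MvPolynomial.C (-c)) Finset.univ).symm
  have hfne : dicksonF p m n ≠ 0 := (dicksonF_monic p m n).ne_zero
  have hswap := swap_dicksonF p m n
  have hswapdeg : (swapPoly (MvPolynomial (Fin n) K) G).natDegree = D₀ := by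
    rw [hswap, natDegree_mul (Polynomial.C_ne_zero.mpr hfne) hP₁ne, natDegree_C, hP₁deg, zero_add]
  have hswaplc : (swapPoly (MvPolynomial (Fin n) K) G).leadingCoeff = dicksonF p m n * Polynomial.C e₀ := by
    rw [hswap, leadingCoeff_mul, leadingCoeff_C, hP₁lc]
  have hGe : ∀ e : ℕ, G.coeff e = MvPolynomial.finSuccEquiv K n (F₁.coeff e) := by
    intro e; rw [hG, Polynomial.coeff_map]; rfl
  have hD₀pos : 0 < D₀ := by
    rw [hD₀]
    refine Nat.mul_pos (Finset.card_pos.2 ⟨1, Finset.mem_erase.2 ⟨one_ne_zero,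
      Finset.mem_univ _⟩⟩) Fintype.card_pos
  refine ⟨-e₀, neg_ne_zero.2 he₀, D₀, hD₀pos, ?_⟩
  intro i hi
  have h1 : ∀ j, D₀ < j →
      (MvPolynomial.finSuccEquiv K n (F₁.coeff ((p^m)^i))).coeff j = 0 := by
    intro j hj
    rw [← hGe, ← swapPoly_coeff_coeff]
    have hz : (swapPoly (MvPolynomial (Fin n) K) G).coeff j = 0 :=
      coeff_eq_zero_of_natDegree_lt (by rw [hswapdeg]; exact hj)
    rw [hz, Polynomial.coeff_zero]
  have h2 : (MvPolynomial.finSuccEquiv K n (F₁.coeff ((p^m)^i))).coeff D₀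
      = (-1)^(n+i) * dicksonC p m n i * e₀ := by
    rw [← hGe, ← swapPoly_coeff_coeff, ← hswapdeg, coeff_natDegree, hswaplc,
      Polynomial.coeff_mul_C, dicksonF_coeff_eq]
  set y := MvPolynomial.finSuccEquiv K n (dicksonC p m (n+1) i) with hydef
  have hy : y = Polynomial.C ((-1 : MvPolynomial (Fin n) K)^(n+1+i)) *
      MvPolynomial.finSuccEquiv K n (F₁.coeff ((p^m)^i)) := by
    rw [hydef, dicksonC, map_mul, map_pow, map_neg, map_one, ← Polynomial.C_1,
      ← Polynomial.C_neg, ← Polynomial.C_pow]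
  have hsign : ((-1 : MvPolynomial (Fin n) K)^(n+1+i)) * ((-1 : MvPolynomial (Fin n) K)^(n+i)) = -1 := by
    rw [← pow_add, show n+1+i+(n+i) = 2*(n+i)+1 by ring, pow_succ, pow_mul, neg_one_sq,
      one_pow, one_mul]
  have hyD : y.coeff D₀ = -e₀ * dicksonC p m n i := by
    rw [hy, coeff_C_mul, h2]
    have : (-1 : MvPolynomial (Fin n) K)^(n+1+i) * ((-1)^(n+i) * dicksonC p m n i * e₀)
        = ((-1 : MvPolynomial (Fin n) K)^(n+1+i) * (-1)^(n+i)) * (dicksonC p m n i * e₀) := by ring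
    rw [this, hsign]; ring
  have hyne : y.coeff D₀ ≠ 0 := by
    rw [hyD]
    exact mul_ne_zero (neg_ne_zero.2 he₀) (hC i hi)
  have hydeg : y.natDegree = D₀ := by
    refine le_antisymm (natDegree_le_iff_coeff_eq_zero.2 fun j hj => ?_)
      (le_natDegree_of_ne_zero hyne)
    rw [hy, coeff_C_mul, h1 j hj, mul_zero]
  refine ⟨hydeg, ?_⟩
  rw [leadingCoeff, hydeg, hyD]

lemma degree_eq_sum' {N : ℕ} (a : Fin N →₀ ℕ) : (a.sum fun _ e => e) = ∑ i, a i :=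
  Finsupp.sum_fintype _ _ (fun _ => rfl)

lemma degree_eq_sum'' {N : ℕ} (a : Fin N →₀ ℕ) : a.degree = a.sum fun _ e => e := rfl

lemma dickson_algInd (hm : m ≠ 0) (n : ℕ) :
    AlgebraicIndependent K (fun i : Fin n => dicksonC p m n (i : ℕ)) := by
  induction n with
  | zero => exact algebraicIndependent_empty_type
  | succ n IH =>
    have hC : ∀ i : ℕ, i ≤ n → dicksonC p m n i ≠ 0 := by
      intro i hi
      rcases lt_or_eq_of_le hi with h | h
      · simpa using IH.ne_zero ⟨i, h⟩
      · rw [h, dicksonC_self p m hm]; exact one_ne_zero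
    obtain ⟨ε, hε, D, hD, hkey⟩ := dickson_step p m n hC
    apply AlgebraicIndependent.of_comp (MvPolynomial.finSuccEquiv K n).toAlgHom
    rw [algebraicIndependent_iff]
    intro P hP
    by_contra hP0
    set y : Fin (n+1) → Polynomial (MvPolynomial (Fin n) K) :=
      fun i => MvPolynomial.finSuccEquiv K n (dicksonC p m (n+1) (i : ℕ)) with hy
    have hPy : MvPolynomial.aeval y P = 0 := hP
    have hyne : ∀ i : Fin (n+1), y i ≠ 0 := by
      intro i h0
      have h := (hkey i (Fin.is_le i)).2
      have h0' : MvPolynomial.finSuccEquiv K n (dicksonC p m (n+1) (i : ℕ)) = 0 := h0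
      rw [h0', Polynomial.leadingCoeff_zero] at h
      exact (mul_ne_zero hε (hC i (Fin.is_le i))) h.symm
    set c : Fin (n+1) → MvPolynomial (Fin n) K := fun j => dicksonC p m n (j : ℕ) with hc
    set d := P.totalDegree with hd
    have hterm : ∀ a ∈ P.support,
        (MvPolynomial.aeval y (MvPolynomial.monomial a (MvPolynomial.coeff a P))).coeff (d * D)
        = if a.degree = d
            then MvPolynomial.aeval c (MvPolynomial.monomial a (MvPolynomial.coeff a P)) * ε ^ d
            else 0 := by
      intro a ha
      have hr : MvPolynomial.coeff a P ≠ 0 := MvPolynomial.mem_support_iff.1 ha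
      rw [MvPolynomial.aeval_monomial, Finsupp.prod_pow]
      have halg : algebraMap K (Polynomial (MvPolynomial (Fin n) K)) (MvPolynomial.coeff a P)
          = Polynomial.C (MvPolynomial.C (MvPolynomial.coeff a P)) := by
        rw [Polynomial.algebraMap_apply, MvPolynomial.algebraMap_eq]
      rw [halg, Polynomial.coeff_C_mul]
      have hprodne : (∏ i, y i ^ a i) ≠ 0 :=
        Finset.prod_ne_zero_iff.2 fun i _ => pow_ne_zero _ (hyne i)
      have hpdeg : (∏ i, y i ^ a i).natDegree = (∑ i, a i) * D := by
        rw [Polynomial.natDegree_prod _ _ (fun i _ => pow_ne_zero _ (hyne i))]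
        rw [Finset.sum_congr rfl fun i _ => Polynomial.natDegree_pow _ _]
        rw [Finset.sum_congr rfl fun i _ => by rw [(hkey i (Fin.is_le i)).1]]
        rw [← Finset.sum_mul]
      by_cases h : a.degree = d
      · rw [if_pos h]
        have hsum : ∑ i, a i = d := by
          rw [← degree_eq_sum', ← degree_eq_sum'', h]
        have hDd : d * D = (∏ i, y i ^ a i).natDegree := by rw [hpdeg, hsum]
        rw [hDd, Polynomial.coeff_natDegree, Polynomial.leadingCoeff_prod]
        rw [Finset.prod_congr rfl fun i _ => Polynomial.leadingCoeff_pow _ _]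
        rw [Finset.prod_congr rfl fun i _ => by rw [(hkey i (Fin.is_le i)).2]]
        rw [MvPolynomial.aeval_monomial, Finsupp.prod_pow, MvPolynomial.algebraMap_eq]
        simp only [mul_pow, Finset.prod_mul_distrib, Finset.prod_pow_eq_pow_sum, hsum]
        ring
      · rw [if_neg h]
        have hle : (∑ i, a i) ≤ d := by
          rw [← degree_eq_sum']
          exact MvPolynomial.le_totalDegree ha
        have hne : (∑ i, a i) ≠ d := by
          rw [← degree_eq_sum', ← degree_eq_sum'']; exact h
        have hlt : (∑ i, a i) < d := lt_of_le_of_ne hle hne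
        rw [Polynomial.coeff_eq_zero_of_natDegree_lt, mul_zero]
        rw [hpdeg]
        exact (Nat.mul_lt_mul_right hD).mpr hlt
    have hcoeffsum : (MvPolynomial.aeval y P).coeff (d * D)
        = ∑ a ∈ P.support, (if a.degree = d
            then MvPolynomial.aeval c (MvPolynomial.monomial a (MvPolynomial.coeff a P)) * ε ^ d
            else 0) := by
      conv_lhs => rw [MvPolynomial.as_sum P]
      rw [map_sum, Polynomial.finset_sum_coeff]
      exact Finset.sum_congr rfl hterm
    have hfilter : (MvPolynomial.aeval y P).coeff (d * D)
        = MvPolynomial.aeval c (MvPolynomial.homogeneousComponent d P) * ε ^ d := by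
      rw [hcoeffsum, ← Finset.sum_filter, MvPolynomial.homogeneousComponent_apply,
        map_sum, Finset.sum_mul]
    have hPd0 : MvPolynomial.aeval c (MvPolynomial.homogeneousComponent d P) = 0 := by
      have h0 : MvPolynomial.aeval c (MvPolynomial.homogeneousComponent d P) * ε ^ d = 0 := by
        rw [← hfilter, hPy, Polynomial.coeff_zero]
      rcases mul_eq_zero.1 h0 with h | h
      · exact h
      · exact absurd h (pow_ne_zero _ hε)
    set g : Fin (n+1) → MvPolynomial (Fin n) K :=
      Fin.snoc (fun j : Fin n => MvPolynomial.X j) 1 with hg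
    have hgc : (fun i : Fin (n+1) =>
        MvPolynomial.aeval (fun j : Fin n => dicksonC p m n (j : ℕ)) (g i)) = c := by
      funext i
      refine Fin.lastCases ?_ ?_ i
      · rw [hg]
        simp only [Fin.snoc_last, map_one, hc]
        rw [show ((Fin.last n : Fin (n+1)) : ℕ) = n from rfl, dicksonC_self p m hm]
      · intro j
        rw [hg]
        simp only [Fin.snoc_castSucc, MvPolynomial.aeval_X, hc, Fin.coe_castSucc]
    have hcomp : MvPolynomial.aeval (fun j : Fin n => dicksonC p m n (j : ℕ))
        (MvPolynomial.aeval g (MvPolynomial.homogeneousComponent d P)) = 0 := by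
      rw [MvPolynomial.comp_aeval_apply, hgc]
      exact hPd0
    have hQ0 : MvPolynomial.aeval g (MvPolynomial.homogeneousComponent d P) = 0 :=
      algebraicIndependent_iff.1 IH _ hcomp
    -- choose a top-degree monomial
    have hsupp : P.support.Nonempty := by
      rw [Finset.nonempty_iff_ne_empty]
      intro h
      exact hP0 (MvPolynomial.support_eq_empty.1 h)
    obtain ⟨a₀, ha₀, hsup⟩ := Finset.exists_mem_eq_sup P.support hsupp
      (fun s : Fin (n+1) →₀ ℕ => s.sum fun _ e => e)
    have hda₀ : a₀.degree = d := by
      rw [degree_eq_sum'', hd, MvPolynomial.totalDegree, hsup]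
    have haevalg : ∀ (a : Fin (n+1) →₀ ℕ) (r : K),
        MvPolynomial.aeval g (MvPolynomial.monomial a r)
        = MvPolynomial.monomial
            (Finsupp.equivFunOnFinite.symm fun j : Fin n => a (Fin.castSucc j)) r := by
      intro a r
      rw [MvPolynomial.aeval_monomial, Finsupp.prod_pow, MvPolynomial.algebraMap_eq,
        Fin.prod_univ_castSucc, MvPolynomial.monomial_eq, Finsupp.prod_pow]
      rw [hg]
      simp [Fin.snoc_castSucc, Fin.snoc_last]
    set b₀ : Fin n →₀ ℕ := Finsupp.equivFunOnFinite.symm fun j : Fin n => a₀ (Fin.castSucc j)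
      with hb₀
    have hhomog : ∀ a ∈ (MvPolynomial.homogeneousComponent d P).support, a.degree = d := by
      intro a ha
      have := MvPolynomial.mem_support_iff.1 ha
      rw [MvPolynomial.coeff_homogeneousComponent] at this
      by_contra hcon
      rw [if_neg hcon] at this
      exact this rfl
    have hQcoeff : MvPolynomial.coeff b₀
        (MvPolynomial.aeval g (MvPolynomial.homogeneousComponent d P))
        = MvPolynomial.coeff a₀ P := by
      conv_lhs => rw [MvPolynomial.as_sum (MvPolynomial.homogeneousComponent d P)]
      rw [map_sum, MvPolynomial.coeff_sum]
      rw [Finset.sum_congr rfl fun a _ => by rw [haevalg a, MvPolynomial.coeff_monomial]]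
      rw [Finset.sum_eq_single a₀]
      · rw [if_pos rfl, MvPolynomial.coeff_homogeneousComponent, if_pos hda₀]
      · intro a ha hne
        rw [if_neg]
        intro habs
        apply hne
        have hfun : (fun j : Fin n => a (Fin.castSucc j))
            = fun j : Fin n => a₀ (Fin.castSucc j) :=
          Finsupp.equivFunOnFinite.symm.injective (habs.trans hb₀)
        have hsa : ∑ j : Fin n, a (Fin.castSucc j) = ∑ j : Fin n, a₀ (Fin.castSucc j) := by
          rw [funext_iff] at hfun
          exact Finset.sum_congr rfl fun j _ => hfun j
        have hsuma : ∑ i : Fin (n+1), a i = d := by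
          rw [← degree_eq_sum', ← degree_eq_sum'']
          exact hhomog a ha
        have hsuma₀ : ∑ i : Fin (n+1), a₀ i = d := by
          rw [← degree_eq_sum', ← degree_eq_sum'']
          exact hda₀
        rw [Fin.sum_univ_castSucc] at hsuma hsuma₀
        have hlast : a (Fin.last n) = a₀ (Fin.last n) := by omega
        ext i
        refine Fin.lastCases hlast (fun j => ?_) i
        rw [funext_iff] at hfun
        exact hfun j
      · intro habs
        rw [if_pos rfl]
        have : a₀ ∈ (MvPolynomial.homogeneousComponent d P).support := by
          rw [MvPolynomial.mem_support_iff, MvPolynomial.coeff_homogeneousComponent,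
            if_pos hda₀]
          exact MvPolynomial.mem_support_iff.1 ha₀
        exact absurd this habs
    rw [hQ0, MvPolynomial.coeff_zero] at hQcoeff
    exact (MvPolynomial.mem_support_iff.1 ha₀) hQcoeff.symm


/-- the Dickson invariants `C_{n,0}, …, C_{n,n−1}` are algebraically
independent over `F_q` in `R = F_q[x_1,…,x_n]`. -/
theorem dicksonC_algebraicIndependent (p m n : ℕ) [Fact p.Prime]
    [Fintype (GaloisField p m)] (hm : 1 ≤ m) (hn : 1 ≤ n) :
    AlgebraicIndependent (GaloisField p m)
      (fun i : Fin n => dicksonC p m n (i : ℕ)) := by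
  exact dickson_algInd p m (Nat.one_le_iff_ne_zero.mp hm) n
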